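/- Fokker–Planck moment formulas (Lemma 5.1, FP case): let N ≥ 1, let E : [0,∞) → ℝ^N be continuous and bounded, let t ≥ 0, and let f ∈ L¹(ℝ^N) with ∫ |v| |f(v)| dv < ∞. Define f_t(v) = e^{Nt} ∫_{ℝ^N} f( e^{t} v − ∫_0^t e^{σ} E(σ) dσ + (e^{2t} − 1)^{1/2} w ) M(w) dw. Then f_t ∈ L¹(ℝ^N), ρ(f_t) = ρ(f), and J(f_t) = e^{-t} J(f) + ρ(f) ∫_0^t e^{-(t-σ)} E(σ) dσ. -/

import Mathlib

open MeasureTheory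

/-- The standard Gaussian (Maxwellian) density on `ℝ^N`. -/
noncomputable def gaussM (N : ℕ) (v : EuclideanSpace ℝ (Fin N)) : ℝ :=
  (2 * Real.pi) ^ (-(N : ℝ) / 2) * Real.exp (-‖v‖ ^ 2 / 2)

namespace FPaux
variable {N : ℕ}

lemma gaussM_nonneg (v : EuclideanSpace ℝ (Fin N)) : 0 ≤ gaussM N v := by
  unfold gaussM; positivity

lemma gaussM_continuous : Continuous (gaussM N) := by
  unfold gaussM
  fun_prop

lemma gaussM_neg (v : EuclideanSpace ℝ (Fin N)) : gaussM N (-v) = gaussM N v := by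
  simp [gaussM]

lemma integrable_exp_neg_mul_sq_norm {b : ℝ} (hb : 0 < b) :
    Integrable (fun v : EuclideanSpace ℝ (Fin N) => Real.exp (-b * ‖v‖ ^ 2)) := by
  have h := (GaussianFourier.integrable_cexp_neg_mul_sq_norm_add (V := EuclideanSpace ℝ (Fin N))
      (b := (b : ℂ)) (by simpa using hb) 0 0).norm
  refine h.congr (Filter.Eventually.of_forall fun v => ?_)
  simp [Complex.norm_exp]
  norm_num [← Complex.ofReal_pow]

lemma gaussM_eq (v : EuclideanSpace ℝ (Fin N)) :
    gaussM N v = (2 * Real.pi) ^ (-(N : ℝ) / 2) * Real.exp (-(1/2 : ℝ) * ‖v‖ ^ 2) := by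
  unfold gaussM; ring_nf

lemma integrable_gaussM : Integrable (gaussM N) := by
  have h := (integrable_exp_neg_mul_sq_norm (N := N) (b := (1/2 : ℝ)) (by norm_num)).const_mul
    ((2 * Real.pi) ^ (-(N : ℝ) / 2))
  exact h.congr (Filter.Eventually.of_forall fun v => (gaussM_eq v).symm)

lemma integral_gaussM : (∫ v : EuclideanSpace ℝ (Fin N), gaussM N v) = 1 := by
  have h2pi : (0:ℝ) < 2 * Real.pi := by positivity
  calc (∫ v : EuclideanSpace ℝ (Fin N), gaussM N v)
      = (2 * Real.pi) ^ (-(N : ℝ) / 2)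
        * ∫ v : EuclideanSpace ℝ (Fin N), Real.exp (-(1/2 : ℝ) * ‖v‖ ^ 2) := by
        simp_rw [gaussM_eq]; rw [integral_const_mul]
    _ = 1 := by
        rw [GaussianFourier.integral_rexp_neg_mul_sq_norm (by norm_num : (0:ℝ) < 1/2)]
        rw [finrank_euclideanSpace_fin]
        rw [show Real.pi / (1/2 : ℝ) = 2 * Real.pi by ring]
        rw [← Real.rpow_add h2pi, show (-(N:ℝ)/2 + (N:ℝ)/2 : ℝ) = 0 by ring, Real.rpow_zero]


lemma abs_coord_le_norm (v : EuclideanSpace ℝ (Fin N)) (i : Fin N) : |v i| ≤ ‖v‖ := by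
  rw [EuclideanSpace.norm_eq, ← Real.sqrt_sq_eq_abs]
  apply Real.sqrt_le_sqrt
  have : |v i| ^ 2 ≤ ∑ j, |v j| ^ 2 :=
    Finset.single_le_sum (f := fun j => |v j| ^ 2) (fun j _ => by positivity) (Finset.mem_univ i)
  simpa [sq_abs] using this

lemma integrable_norm_mul_gaussM :
    Integrable (fun v : EuclideanSpace ℝ (Fin N) => ‖v‖ * gaussM N v) := by
  set K : ℝ := (2 * Real.pi) ^ (-(N : ℝ) / 2) with hK
  have hK0 : 0 < K := by rw [hK]; positivity
  refine Integrable.mono' (g := fun v => (K * Real.exp 1) * Real.exp (-(1/4 : ℝ) * ‖v‖ ^ 2))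
    ((integrable_exp_neg_mul_sq_norm (by norm_num)).const_mul _)
    (continuous_norm.mul gaussM_continuous).aestronglyMeasurable
    (Filter.Eventually.of_forall fun v => ?_)
  have h1 : ‖v‖ ≤ Real.exp (‖v‖ ^ 2 / 4 + 1) := by
    have h2 : ‖v‖ ≤ ‖v‖ ^ 2 / 4 + 1 := by nlinarith [sq_nonneg (‖v‖ / 2 - 1)]
    exact h2.trans (by linarith [Real.add_one_le_exp (‖v‖ ^ 2 / 4 + 1)])
  have hnn : 0 ≤ ‖v‖ * gaussM N v := mul_nonneg (norm_nonneg v) (gaussM_nonneg v)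
  rw [Real.norm_eq_abs, abs_of_nonneg hnn, gaussM_eq]
  calc ‖v‖ * (K * Real.exp (-(1/2 : ℝ) * ‖v‖ ^ 2))
      ≤ Real.exp (‖v‖ ^ 2 / 4 + 1) * (K * Real.exp (-(1/2 : ℝ) * ‖v‖ ^ 2)) := by
        apply mul_le_mul_of_nonneg_right h1; positivity
    _ = (K * Real.exp 1) * Real.exp (-(1/4 : ℝ) * ‖v‖ ^ 2) := by
        rw [show (K * Real.exp 1) * Real.exp (-(1/4 : ℝ) * ‖v‖ ^ 2)
            = K * (Real.exp 1 * Real.exp (-(1/4 : ℝ) * ‖v‖ ^ 2)) from by ring,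
          ← Real.exp_add,
          show Real.exp (‖v‖ ^ 2 / 4 + 1) * (K * Real.exp (-(1/2 : ℝ) * ‖v‖ ^ 2))
            = K * (Real.exp (‖v‖ ^ 2 / 4 + 1) * Real.exp (-(1/2 : ℝ) * ‖v‖ ^ 2)) from by ring,
          ← Real.exp_add]
        congr 1
        ring

lemma integrable_coord_mul_gaussM (i : Fin N) :
    Integrable (fun v : EuclideanSpace ℝ (Fin N) => v i * gaussM N v) := by
  refine Integrable.mono' integrable_norm_mul_gaussM
    (((EuclideanSpace.proj i).continuous.mul gaussM_continuous).aestronglyMeasurable)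
    (Filter.Eventually.of_forall fun v => ?_)
  rw [Real.norm_eq_abs, abs_mul, abs_of_nonneg (gaussM_nonneg v)]
  exact mul_le_mul_of_nonneg_right (abs_coord_le_norm v i) (gaussM_nonneg v)

lemma integral_coord_mul_gaussM (i : Fin N) :
    (∫ v : EuclideanSpace ℝ (Fin N), v i * gaussM N v) = 0 := by
  have h := integral_neg_eq_self (fun v : EuclideanSpace ℝ (Fin N) => v i * gaussM N v)
    (volume : Measure (EuclideanSpace ℝ (Fin N)))
  have h2 : (∫ v : EuclideanSpace ℝ (Fin N), (-v) i * gaussM N (-v))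
      = - ∫ v : EuclideanSpace ℝ (Fin N), v i * gaussM N v := by
    rw [← integral_neg]
    congr 1; funext v
    simp [gaussM_neg]
  rw [h2] at h
  linarith


lemma comp_affine_integrable {g : EuclideanSpace ℝ (Fin N) → ℝ}
    (hg : Integrable g) {a : ℝ} (ha : a ≠ 0) (b : EuclideanSpace ℝ (Fin N)) :
    Integrable (fun v : EuclideanSpace ℝ (Fin N) => g (a • v + b)) := by
  have h1 : Integrable (fun u : EuclideanSpace ℝ (Fin N) => g (u + b)) :=
    ((measurePreserving_add_right volume b).integrable_comp hg.aestronglyMeasurable).2 hg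
  exact h1.comp_smul ha

lemma comp_affine_integral (g : EuclideanSpace ℝ (Fin N) → ℝ) {a : ℝ} (ha : 0 < a)
    (b : EuclideanSpace ℝ (Fin N)) :
    (∫ v : EuclideanSpace ℝ (Fin N), g (a • v + b))
      = (a ^ N)⁻¹ * ∫ u : EuclideanSpace ℝ (Fin N), g u := by
  have h := Measure.integral_comp_smul (volume : Measure (EuclideanSpace ℝ (Fin N)))
    (fun u => g (u + b)) a
  rw [show (fun v : EuclideanSpace ℝ (Fin N) => g (a • v + b))
      = fun v : EuclideanSpace ℝ (Fin N) => g ((a • v) + b) from rfl]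
  rw [h, integral_add_right_eq_self (fun u : EuclideanSpace ℝ (Fin N) => g u) b]
  rw [finrank_euclideanSpace_fin, smul_eq_mul, abs_of_nonneg (by positivity)]

lemma qmp {a : ℝ} (ha : a ≠ 0) {g : EuclideanSpace ℝ (Fin N) → EuclideanSpace ℝ (Fin N)}
    (hg : Measurable g) :
    Measure.QuasiMeasurePreserving
      (fun p : EuclideanSpace ℝ (Fin N) × EuclideanSpace ℝ (Fin N) => a • p.1 + g p.2)
      ((volume : Measure (EuclideanSpace ℝ (Fin N))).prod volume) volume := by
  have hm : Measurable
      (fun p : EuclideanSpace ℝ (Fin N) × EuclideanSpace ℝ (Fin N) => a • p.1 + g p.2) :=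
    (measurable_fst.const_smul a).add (hg.comp measurable_snd)
  refine ⟨hm, Measure.AbsolutelyContinuous.mk fun S hS h0 => ?_⟩
  rw [Measure.map_apply hm hS, Measure.prod_apply_symm (hm hS)]
  have hz : ∀ w : EuclideanSpace ℝ (Fin N),
      volume ((fun v : EuclideanSpace ℝ (Fin N) => (v, w)) ⁻¹'
        ((fun p : EuclideanSpace ℝ (Fin N) × EuclideanSpace ℝ (Fin N) => a • p.1 + g p.2) ⁻¹' S))
        = 0 := by
    intro w
    have hset : ((fun v : EuclideanSpace ℝ (Fin N) => (v, w)) ⁻¹'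
        ((fun p : EuclideanSpace ℝ (Fin N) × EuclideanSpace ℝ (Fin N) => a • p.1 + g p.2) ⁻¹' S))
        = (fun v : EuclideanSpace ℝ (Fin N) => a • v) ⁻¹'
          ((fun u : EuclideanSpace ℝ (Fin N) => u + g w) ⁻¹' S) := by
      ext v; simp [Set.mem_preimage]
    rw [hset, Measure.addHaar_preimage_smul volume ha]
    have h1 : volume ((fun u : EuclideanSpace ℝ (Fin N) => u + g w) ⁻¹' S) = 0 := by
      rw [measure_preimage_add_right volume (g w) S]; exact h0
    simp [h1]
  simp [hz]

end FPaux
/- Fokker–Planck moment formulas (Lemma 5.1, FP case): the Mehler-type solution `f_t`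
of the kinetic Fokker–Planck equation driven by `E` is integrable, mass is conserved, and
`J(f_t) = e^{-t} J(f) + ρ(f) ∫_0^t e^{-(t-σ)} E(σ) dσ`. -/
open FPaux in
/-- Fokker–Planck moment formulas (Lemma 5.1, FP case): the Mehler-type solution `f_t`
of the kinetic Fokker–Planck equation driven by `E` is integrable, mass is conserved, and
`J(f_t) = e^{-t} J(f) + ρ(f) ∫_0^t e^{-(t-σ)} E(σ) dσ`. -/
theorem FP_moments (N : ℕ) (hN : 1 ≤ N)
    (E : ℝ → EuclideanSpace ℝ (Fin N)) (hEc : Continuous E)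
    (R : ℝ) (hEb : ∀ r, ‖E r‖ ≤ R)
    (t : ℝ) (ht : 0 ≤ t)
    (f : EuclideanSpace ℝ (Fin N) → ℝ) (hf : Integrable f)
    (hf1 : Integrable (fun v : EuclideanSpace ℝ (Fin N) => ‖v‖ * |f v|))
    (ft : EuclideanSpace ℝ (Fin N) → ℝ)
    (hft : ∀ v, ft v
      = Real.exp (N * t) * ∫ w : EuclideanSpace ℝ (Fin N),
          f (Real.exp t • v - (∫ σ in (0:ℝ)..t, Real.exp σ • E σ)
              + Real.sqrt (Real.exp (2 * t) - 1) • w) * gaussM N w) :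
    Integrable ft ∧
    ((∫ v : EuclideanSpace ℝ (Fin N), ft v) = ∫ v : EuclideanSpace ℝ (Fin N), f v) ∧
    (∀ i : Fin N, (∫ v : EuclideanSpace ℝ (Fin N), v i * ft v)
      = Real.exp (-t) * (∫ v : EuclideanSpace ℝ (Fin N), v i * f v)
        + (∫ v : EuclideanSpace ℝ (Fin N), f v)
          * ∫ σ in (0:ℝ)..t, Real.exp (-(t - σ)) * E σ i) := by
  classical
  set a : ℝ := Real.exp t with ha_def
  have ha0 : 0 < a := Real.exp_pos t
  have haN : (0:ℝ) < a ^ N := pow_pos ha0 N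
  set c : EuclideanSpace ℝ (Fin N) := ∫ σ in (0:ℝ)..t, Real.exp σ • E σ with hc_def
  set s : ℝ := Real.sqrt (Real.exp (2*t) - 1) with hs_def
  have hs0 : 0 ≤ s := Real.sqrt_nonneg _
  set d : EuclideanSpace ℝ (Fin N) → EuclideanSpace ℝ (Fin N) := fun w => s • w - c with hd_def
  have hd_meas : Measurable d := (measurable_id.const_smul s).sub measurable_const
  have hd_bound : ∀ w, ‖d w‖ ≤ s * ‖w‖ + ‖c‖ := by
    intro w
    calc ‖s • w - c‖ ≤ ‖s • w‖ + ‖c‖ := norm_sub_le _ _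
      _ = s * ‖w‖ + ‖c‖ := by rw [norm_smul, Real.norm_eq_abs, abs_of_nonneg hs0]
  have hft' : ∀ v, ft v = a ^ N * ∫ w, f (a • v + d w) * gaussM N w := by
    intro v
    rw [hft v]
    congr 1
    · exact Real.exp_nat_mul t N
    · exact congrArg (integral volume) (funext fun w => by
        simp only [hd_def]
        rw [sub_add_eq_add_sub, add_sub_assoc])
  set F : EuclideanSpace ℝ (Fin N) × EuclideanSpace ℝ (Fin N) → ℝ :=
    fun p => f (a • p.1 + d p.2) * gaussM N p.2 with hF_def
  have hFm : AEStronglyMeasurable F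
      ((volume : Measure (EuclideanSpace ℝ (Fin N))).prod volume) :=
    (hf.aestronglyMeasurable.comp_quasiMeasurePreserving (qmp ha0.ne' hd_meas)).mul
      ((gaussM_continuous.comp continuous_snd).aestronglyMeasurable)
  have habs : ∀ p : EuclideanSpace ℝ (Fin N) × EuclideanSpace ℝ (Fin N),
      ‖F p‖ = |f (a • p.1 + d p.2)| * gaussM N p.2 := fun p => by
    rw [Real.norm_eq_abs, abs_mul, abs_of_nonneg (gaussM_nonneg _)]
  have hsec : ∀ w, Integrable (fun v => F (v, w)) := by
    intro w
    simp only [hF_def]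
    exact (comp_affine_integrable hf ha0.ne' (d w)).mul_const _
  have hnorm1 : ∀ w, (∫ v, ‖F (v, w)‖) = ((a ^ N)⁻¹ * ∫ u, |f u|) * gaussM N w := by
    intro w
    calc (∫ v, ‖F (v, w)‖) = ∫ v, (fun u => |f u|) (a • v + d w) * gaussM N w := by
          simp only [habs]
      _ = (∫ v, (fun u => |f u|) (a • v + d w)) * gaussM N w := by rw [integral_mul_const]
      _ = ((a ^ N)⁻¹ * ∫ u, |f u|) * gaussM N w := by
          rw [comp_affine_integral (fun u => |f u|) ha0 (d w)]
  have hFint : Integrable F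
      ((volume : Measure (EuclideanSpace ℝ (Fin N))).prod volume) := by
    rw [integrable_prod_iff' hFm]
    refine ⟨Filter.Eventually.of_forall hsec, ?_⟩
    rw [show (fun w => ∫ v, ‖F (v, w)‖) = fun w => ((a ^ N)⁻¹ * ∫ u, |f u|) * gaussM N w
      from funext hnorm1]
    exact integrable_gaussM.const_mul _
  have hftInt : Integrable ft :=
    ((hFint.integral_prod_left).const_mul (a ^ N)).congr
      (Filter.Eventually.of_forall fun v => (hft' v).symm)
  have hswap : (∫ v, ∫ w, F (v, w)) = ∫ w, ∫ v, F (v, w) :=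
    integral_integral_swap (f := fun v w => F (v, w)) hFint
  have hinner1 : ∀ w, (∫ v, F (v, w)) = ((a ^ N)⁻¹ * ∫ u, f u) * gaussM N w := by
    intro w
    simp only [hF_def]
    rw [integral_mul_const,
      show (∫ v, f (a • v + d w)) = ∫ v, (fun u => f u) (a • v + d w) from rfl,
      comp_affine_integral (fun u => f u) ha0 (d w)]
  have hmass : (∫ v, ft v) = ∫ v, f v := by
    calc (∫ v, ft v) = ∫ v, a ^ N * ∫ w, F (v, w) := by simp only [hft', hF_def]
      _ = a ^ N * ∫ v, ∫ w, F (v, w) := integral_const_mul _ _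
      _ = a ^ N * ∫ w, ∫ v, F (v, w) := by rw [hswap]
      _ = a ^ N * ∫ w, ((a ^ N)⁻¹ * ∫ u, f u) * gaussM N w := by simp only [hinner1]
      _ = a ^ N * (((a ^ N)⁻¹ * ∫ u, f u) * ∫ w, gaussM N w) := by rw [integral_const_mul]
      _ = ∫ v, f v := by rw [integral_gaussM]; field_simp
  refine ⟨hftInt, hmass, fun i => ?_⟩
  -- first moment
  set ρ : ℝ := ∫ v, f v with hρ_def
  set J : ℝ := ∫ v, v i * f v with hJ_def
  set I0 : ℝ := ∫ u, |f u| with hI0_def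
  set I1 : ℝ := ∫ u, ‖u‖ * |f u| with hI1_def
  have hI0nn : 0 ≤ I0 := integral_nonneg fun u => abs_nonneg _
  have hI1nn : 0 ≤ I1 := integral_nonneg fun u => by positivity
  set G : EuclideanSpace ℝ (Fin N) → EuclideanSpace ℝ (Fin N) → ℝ :=
    fun z u => (a⁻¹ * ((u - z) i)) * f u with hG_def
  have hGcont : ∀ z, Continuous fun u : EuclideanSpace ℝ (Fin N) => a⁻¹ * ((u - z) i) := by
    intro z
    exact continuous_const.mul
      ((EuclideanSpace.proj (𝕜 := ℝ) i).continuous.comp (continuous_id.sub continuous_const))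
  have hGbound : ∀ z u, ‖G z u‖ ≤ a⁻¹ * (‖u‖ * |f u|) + (a⁻¹ * ‖z‖) * |f u| := by
    intro z u
    have h1 : |(u - z) i| ≤ ‖u‖ + ‖z‖ := (abs_coord_le_norm (u - z) i).trans (norm_sub_le u z)
    have ha' : (0:ℝ) < a⁻¹ := inv_pos.mpr ha0
    calc ‖G z u‖ = a⁻¹ * |(u - z) i| * |f u| := by
          rw [Real.norm_eq_abs, abs_mul, abs_mul, abs_of_nonneg ha'.le]
      _ ≤ a⁻¹ * (‖u‖ + ‖z‖) * |f u| := by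
          apply mul_le_mul_of_nonneg_right _ (abs_nonneg _)
          exact mul_le_mul_of_nonneg_left h1 ha'.le
      _ = a⁻¹ * (‖u‖ * |f u|) + (a⁻¹ * ‖z‖) * |f u| := by ring
  have hint1 : Integrable (fun u : EuclideanSpace ℝ (Fin N) => u i * f u) := by
    refine Integrable.mono' hf1
      (((EuclideanSpace.proj i).continuous.aestronglyMeasurable).mul hf.aestronglyMeasurable) ?_
    refine Filter.Eventually.of_forall fun u => ?_
    rw [Real.norm_eq_abs, abs_mul]
    exact mul_le_mul_of_nonneg_right (abs_coord_le_norm u i) (abs_nonneg _)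
  have hGint : ∀ z, Integrable (G z) := by
    intro z
    refine Integrable.mono' ((hf1.const_mul a⁻¹).add (hf.abs.const_mul (a⁻¹ * ‖z‖)))
      ((hGcont z).aestronglyMeasurable.mul hf.aestronglyMeasurable)
      (Filter.Eventually.of_forall fun u => hGbound z u)
  have hGval : ∀ z, (∫ u, G z u) = a⁻¹ * (J - z i * ρ) := by
    intro z
    have hptw : ∀ u : EuclideanSpace ℝ (Fin N),
        G z u = a⁻¹ * (u i * f u) - (a⁻¹ * z i) * f u := by
      intro u
      simp only [hG_def, PiLp.sub_apply]
      ring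
    calc (∫ u, G z u) = ∫ u, (a⁻¹ * (u i * f u) - (a⁻¹ * z i) * f u) := by simp only [hptw]
      _ = (∫ u, a⁻¹ * (u i * f u)) - ∫ u, (a⁻¹ * z i) * f u :=
          integral_sub (hint1.const_mul _) (hf.const_mul _)
      _ = a⁻¹ * J - (a⁻¹ * z i) * ρ := by rw [integral_const_mul, integral_const_mul]
      _ = a⁻¹ * (J - z i * ρ) := by ring
  have hGabs_bound : ∀ z, (∫ u, |G z u|) ≤ a⁻¹ * (I1 + ‖z‖ * I0) := by
    intro z
    calc (∫ u, |G z u|)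
        ≤ ∫ u, (a⁻¹ * (‖u‖ * |f u|) + (a⁻¹ * ‖z‖) * |f u|) := by
          refine integral_mono (hGint z).abs
            ((hf1.const_mul a⁻¹).add (hf.abs.const_mul (a⁻¹ * ‖z‖))) fun u => ?_
          simpa [Real.norm_eq_abs] using hGbound z u
      _ = a⁻¹ * I1 + (a⁻¹ * ‖z‖) * I0 := by
          rw [integral_add (hf1.const_mul a⁻¹) (hf.abs.const_mul (a⁻¹ * ‖z‖)),
            integral_const_mul, integral_const_mul]
      _ = a⁻¹ * (I1 + ‖z‖ * I0) := by ring
  set F2 : EuclideanSpace ℝ (Fin N) × EuclideanSpace ℝ (Fin N) → ℝ :=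
    fun p => p.1 i * F p with hF2_def
  have hF2m : AEStronglyMeasurable F2
      ((volume : Measure (EuclideanSpace ℝ (Fin N))).prod volume) :=
    (((EuclideanSpace.proj i).continuous.comp continuous_fst).aestronglyMeasurable).mul hFm
  have hsec2eq : ∀ w v, F2 (v, w) = G (d w) (a • v + d w) * gaussM N w := by
    intro w v
    simp only [hF2_def, hF_def, hG_def, add_sub_cancel_right]
    have h1 : (a • v) i = a * v i := rfl
    rw [h1, show a⁻¹ * (a * v i) = v i from by field_simp]
    ring
  have hsec2 : ∀ w, Integrable (fun v => F2 (v, w)) := by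
    intro w
    exact ((comp_affine_integrable (hGint (d w)) ha0.ne' (d w)).mul_const (gaussM N w)).congr
      (Filter.Eventually.of_forall fun v => (hsec2eq w v).symm)
  have hnorm2 : ∀ w, (∫ v, ‖F2 (v, w)‖) = ((a ^ N)⁻¹ * ∫ u, |G (d w) u|) * gaussM N w := by
    intro w
    calc (∫ v, ‖F2 (v, w)‖)
        = ∫ v, (fun u => |G (d w) u|) (a • v + d w) * gaussM N w := by
          refine integral_congr_ae (Filter.Eventually.of_forall fun v => ?_)
          show ‖F2 (v, w)‖ = (fun u => |G (d w) u|) (a • v + d w) * gaussM N w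
          rw [hsec2eq w v, Real.norm_eq_abs, abs_mul, abs_of_nonneg (gaussM_nonneg _)]
      _ = (∫ v, (fun u => |G (d w) u|) (a • v + d w)) * gaussM N w := by rw [integral_mul_const]
      _ = ((a ^ N)⁻¹ * ∫ u, |G (d w) u|) * gaussM N w := by
          rw [comp_affine_integral (fun u => |G (d w) u|) ha0 (d w)]
  have hF2int : Integrable F2
      ((volume : Measure (EuclideanSpace ℝ (Fin N))).prod volume) := by
    rw [integrable_prod_iff' hF2m]
    refine ⟨Filter.Eventually.of_forall hsec2, ?_⟩
    refine Integrable.mono'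
      (g := fun w => ((a ^ N)⁻¹ * (a⁻¹ * (I1 + ‖c‖ * I0))) * gaussM N w
        + ((a ^ N)⁻¹ * (a⁻¹ * (s * I0))) * (‖w‖ * gaussM N w))
      ((integrable_gaussM.const_mul _).add (integrable_norm_mul_gaussM.const_mul _))
      ((hF2m.norm.prod_swap).integral_prod_right') ?_
    refine Filter.Eventually.of_forall fun w => ?_
    have hnn : 0 ≤ ∫ v, ‖F2 (v, w)‖ := integral_nonneg fun v => norm_nonneg _
    rw [Real.norm_eq_abs, abs_of_nonneg hnn, hnorm2 w]
    have hGle : (∫ u, |G (d w) u|) ≤ a⁻¹ * (I1 + (s * ‖w‖ + ‖c‖) * I0) := by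
      refine (hGabs_bound (d w)).trans ?_
      have := hd_bound w
      have h2 : I1 + ‖d w‖ * I0 ≤ I1 + (s * ‖w‖ + ‖c‖) * I0 := by
        have := mul_le_mul_of_nonneg_right (hd_bound w) hI0nn
        linarith
      exact mul_le_mul_of_nonneg_left h2 (inv_pos.mpr ha0).le
    calc ((a ^ N)⁻¹ * ∫ u, |G (d w) u|) * gaussM N w
        ≤ ((a ^ N)⁻¹ * (a⁻¹ * (I1 + (s * ‖w‖ + ‖c‖) * I0))) * gaussM N w := by
          apply mul_le_mul_of_nonneg_right _ (gaussM_nonneg _)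
          exact mul_le_mul_of_nonneg_left hGle (inv_pos.mpr haN).le
      _ = ((a ^ N)⁻¹ * (a⁻¹ * (I1 + ‖c‖ * I0))) * gaussM N w
          + ((a ^ N)⁻¹ * (a⁻¹ * (s * I0))) * (‖w‖ * gaussM N w) := by ring
  have hswap2 : (∫ v, ∫ w, F2 (v, w)) = ∫ w, ∫ v, F2 (v, w) :=
    integral_integral_swap (f := fun v w => F2 (v, w)) hF2int
  have hinner2 : ∀ w, (∫ v, F2 (v, w))
      = ((a ^ N)⁻¹ * (a⁻¹ * (J - (s * w i - c i) * ρ))) * gaussM N w := by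
    intro w
    have hdwi : d w i = s * w i - c i := rfl
    calc (∫ v, F2 (v, w)) = ∫ v, G (d w) (a • v + d w) * gaussM N w := by simp only [hsec2eq]
      _ = (∫ v, (fun u => G (d w) u) (a • v + d w)) * gaussM N w := by rw [integral_mul_const]
      _ = ((a ^ N)⁻¹ * ∫ u, G (d w) u) * gaussM N w := by
          rw [comp_affine_integral (fun u => G (d w) u) ha0 (d w)]
      _ = ((a ^ N)⁻¹ * (a⁻¹ * (J - (s * w i - c i) * ρ))) * gaussM N w := by
          rw [hGval (d w), hdwi]
  have hmomV : (∫ v, v i * ft v) = a⁻¹ * (J + c i * ρ) := by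
    have hpt : ∀ v, v i * ft v = a ^ N * ∫ w, F2 (v, w) := by
      intro v
      rw [hft' v, show (fun w => F2 (v, w)) = fun w => v i * F (v, w) from rfl,
        integral_const_mul]
      ring
    set P : ℝ := (a ^ N)⁻¹ * (a⁻¹ * (J + c i * ρ)) with hP_def
    set Q : ℝ := -((a ^ N)⁻¹ * (a⁻¹ * (s * ρ))) with hQ_def
    have hptw2 : ∀ w, ((a ^ N)⁻¹ * (a⁻¹ * (J - (s * w i - c i) * ρ))) * gaussM N w
        = P * gaussM N w + Q * (w i * gaussM N w) := by
      intro w; rw [hP_def, hQ_def]; ring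
    calc (∫ v, v i * ft v) = ∫ v, a ^ N * ∫ w, F2 (v, w) := by simp only [hpt]
      _ = a ^ N * ∫ v, ∫ w, F2 (v, w) := integral_const_mul _ _
      _ = a ^ N * ∫ w, ∫ v, F2 (v, w) := by rw [hswap2]
      _ = a ^ N * ∫ w, (P * gaussM N w + Q * (w i * gaussM N w)) := by
          simp only [hinner2, hptw2]
      _ = a ^ N * ((∫ w, P * gaussM N w) + ∫ w, Q * (w i * gaussM N w)) := by
          rw [integral_add (integrable_gaussM.const_mul _)
            ((integrable_coord_mul_gaussM i).const_mul _)]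
      _ = a ^ N * (P * 1 + Q * 0) := by
          rw [integral_const_mul, integral_const_mul, integral_gaussM, integral_coord_mul_gaussM]
      _ = a⁻¹ * (J + c i * ρ) := by
          rw [mul_one, mul_zero, add_zero, hP_def, ← mul_assoc, mul_inv_cancel₀ haN.ne', one_mul]
  have hci : c i = ∫ σ in (0:ℝ)..t, Real.exp σ * E σ i := by
    have hii : IntervalIntegrable (fun σ => Real.exp σ • E σ) volume 0 t :=
      (Real.continuous_exp.smul hEc).intervalIntegrable 0 t
    have h := (EuclideanSpace.proj (𝕜 := ℝ) i).intervalIntegral_comp_comm hii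
    have h2 : ∀ σ : ℝ, (EuclideanSpace.proj (𝕜 := ℝ) i) (Real.exp σ • E σ)
        = Real.exp σ * E σ i := by
      intro σ
      rw [_root_.map_smul, smul_eq_mul]
      norm_num [EuclideanSpace.proj]
    rw [hc_def]
    calc (∫ σ in (0:ℝ)..t, Real.exp σ • E σ) i
        = (EuclideanSpace.proj (𝕜 := ℝ) i) (∫ σ in (0:ℝ)..t, Real.exp σ • E σ) := rfl
      _ = ∫ σ in (0:ℝ)..t, (EuclideanSpace.proj (𝕜 := ℝ) i) (Real.exp σ • E σ) := h.symm
      _ = ∫ σ in (0:ℝ)..t, Real.exp σ * E σ i := by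
          exact intervalIntegral.integral_congr fun σ _ => h2 σ
  have hEi : (∫ σ in (0:ℝ)..t, Real.exp (-(t - σ)) * E σ i) = a⁻¹ * c i := by
    rw [hci]
    rw [show (∫ σ in (0:ℝ)..t, Real.exp (-(t - σ)) * E σ i)
        = ∫ σ in (0:ℝ)..t, a⁻¹ * (Real.exp σ * E σ i) from
      intervalIntegral.integral_congr fun σ _ => by
        rw [show -(t - σ) = σ - t by ring, Real.exp_sub, ha_def]
        field_simp]
    rw [intervalIntegral.integral_const_mul]
  rw [hmomV, hEi, Real.exp_neg, ← ha_def]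
  ring
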